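/- Let U be unitary on H_s⊗H_e (n = n_s n_e), V_s unitary on H_s, Γ = Tr_s[U(V_s†⊗1_e)], Δ = √(1 − (1/n)‖Γ‖_Tr), and F = (1/(n_s n))‖Γ‖²_HS. Then (1 − Δ)² ≤ F ≤ 1 − Δ², i.e., the maximally-mixed-environment channel fidelity is bounded below by (1−Δ̃_HS)² and above by 1−Δ̃²_HS. -/

import Mathlib

open Matrix Kronecker
open scoped ComplexOrder

/-- Hilbert–Schmidt (Frobenius) norm of a complex square matrix. -/
noncomputable def hsNorm {k : Type*} [Fintype k] (M : Matrix k k ℂ) : ℝ :=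
  Real.sqrt (Matrix.trace (Mᴴ * M)).re

/-- The positive semidefinite square root of a positive semidefinite matrix
(the definition of `Matrix.PosSemidef.sqrt` in the older Mathlib, since removed). -/
noncomputable def Matrix.PosSemidef.sqrt {n : Type*} [Fintype n] [DecidableEq n]
    {A : Matrix n n ℂ} (hA : A.PosSemidef) : Matrix n n ℂ :=
  hA.1.eigenvectorUnitary.1 * diagonal ((↑) ∘ (√·) ∘ hA.1.eigenvalues) *
  (star hA.1.eigenvectorUnitary : Matrix n n ℂ)

/-- Trace norm: trace of the positive-semidefinite square root of `Mᴴ * M`. -/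
noncomputable def traceNorm {k : Type*} [Fintype k] [DecidableEq k] (M : Matrix k k ℂ) : ℝ :=
  (Matrix.trace (Matrix.PosSemidef.sqrt (Matrix.posSemidef_conjTranspose_mul_self M))).re

/-- Induced two-norm: the largest singular value of `M`. -/
noncomputable def twoNorm {k : Type*} [Fintype k] [DecidableEq k] (M : Matrix k k ℂ) : ℝ :=
  ⨆ i, Real.sqrt
    ((Matrix.PosSemidef.isHermitian
      (Matrix.posSemidef_conjTranspose_mul_self M)).eigenvalues i)

/-- Partial trace over the environment factor `e`. -/
noncomputable def ptraceE {s e : Type*} [Fintype s] [Fintype e]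
    (M : Matrix (s × e) (s × e) ℂ) : Matrix s s ℂ :=
  Matrix.of fun i j => ∑ ν : e, M (i, ν) (j, ν)

/-- Partial trace over the system factor `s`. -/
noncomputable def ptraceS {s e : Type*} [Fintype s] [Fintype e]
    (M : Matrix (s × e) (s × e) ℂ) : Matrix e e ℂ :=
  Matrix.of fun μ ν => ∑ i : s, M (i, μ) (i, ν)

/-- A density matrix: positive semidefinite with unit trace. -/
def IsDensity {k : Type*} [Fintype k] (ρ : Matrix k k ℂ) : Prop :=
  ρ.PosSemidef ∧ Matrix.trace ρ = 1

namespace Stmt18Aux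

set_option linter.unusedSectionVars false

noncomputable def sqsum {k : Type*} [Fintype k] (x : k → ℂ) : ℝ :=
  ∑ i, Complex.normSq (x i)

lemma sqsum_nonneg {k : Type*} [Fintype k] (x : k → ℂ) : 0 ≤ sqsum x :=
  Finset.sum_nonneg fun _ _ => Complex.normSq_nonneg _

lemma dotProduct_star_self_re {k : Type*} [Fintype k] (x : k → ℂ) :
    (star x ⬝ᵥ x).re = sqsum x := by
  simp [dotProduct, sqsum, Complex.normSq_apply, Complex.mul_re]

lemma sqsum_mulVec_unitary {k : Type*} [Fintype k] [DecidableEq k] {W : Matrix k k ℂ}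
    (hW : W ∈ Matrix.unitaryGroup k ℂ) (x : k → ℂ) : sqsum (W *ᵥ x) = sqsum x := by
  have h1 : star (W *ᵥ x) ⬝ᵥ (W *ᵥ x) = star x ⬝ᵥ x := by
    rw [Matrix.star_mulVec, Matrix.dotProduct_mulVec, Matrix.vecMul_vecMul,
      ← Matrix.star_eq_conjTranspose, (Matrix.mem_unitaryGroup_iff').mp hW, Matrix.vecMul_one]
  rw [← dotProduct_star_self_re, ← dotProduct_star_self_re, h1]

lemma sqrt_sqsum_eq_norm {k : Type*} [Fintype k] (x : k → ℂ) :
    Real.sqrt (sqsum x) = ‖(WithLp.equiv 2 (k → ℂ)).symm x‖ := by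
  rw [EuclideanSpace.norm_eq]
  congr 1
  simp [sqsum, Complex.normSq_eq_norm_sq]

lemma sqrt_sqsum_sum_le {k ι : Type*} [Fintype k] (t : Finset ι) (g : ι → k → ℂ) :
    Real.sqrt (sqsum (∑ i ∈ t, g i)) ≤ ∑ i ∈ t, Real.sqrt (sqsum (g i)) := by
  have h : (WithLp.equiv 2 (k → ℂ)).symm (∑ i ∈ t, g i)
      = ∑ i ∈ t, (WithLp.equiv 2 (k → ℂ)).symm (g i) := by simp
  rw [sqrt_sqsum_eq_norm, h]
  refine (norm_sum_le _ _).trans_eq ?_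
  exact Finset.sum_congr rfl fun i _ => (sqrt_sqsum_eq_norm (g i)).symm

variable {s e : Type*} [Fintype s] [Fintype e] [DecidableEq s] [DecidableEq e]

lemma ptraceS_mulVec (W : Matrix (s × e) (s × e) ℂ) (v : e → ℂ) :
    (ptraceS W) *ᵥ v
      = ∑ i : s, (fun μ => (W *ᵥ (fun p : s × e => if p.1 = i then v p.2 else 0)) (i, μ)) := by
  funext μ
  simp only [Finset.sum_apply]
  have lhs : ((ptraceS W) *ᵥ v) μ = ∑ ν : e, (∑ j : s, W (j, μ) (j, ν)) * v ν := rfl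
  have rhs : ∀ j : s, (W *ᵥ (fun p : s × e => if p.1 = j then v p.2 else 0)) (j, μ)
      = ∑ ν : e, W (j, μ) (j, ν) * v ν := by
    intro j
    have h0 : (W *ᵥ (fun p : s × e => if p.1 = j then v p.2 else 0)) (j, μ)
        = ∑ p : s × e, W (j, μ) p * (if p.1 = j then v p.2 else 0) := rfl
    rw [h0, Fintype.sum_prod_type]
    rw [Finset.sum_eq_single j]
    · simp
    · intro b _ hb
      simp [hb]
    · simp
  calc ((ptraceS W) *ᵥ v) μ = ∑ ν : e, ∑ j : s, W (j, μ) (j, ν) * v ν := by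
        rw [lhs]; exact Finset.sum_congr rfl fun ν _ => Finset.sum_mul _ _ _
    _ = ∑ j : s, ∑ ν : e, W (j, μ) (j, ν) * v ν := Finset.sum_comm
    _ = ∑ j : s, (W *ᵥ (fun p : s × e => if p.1 = j then v p.2 else 0)) (j, μ) := by
        exact Finset.sum_congr rfl fun j _ => (rhs j).symm

set_option maxHeartbeats 1000000 in
lemma sqrt_eigen_le {W : Matrix (s × e) (s × e) ℂ}
    (hW : W ∈ Matrix.unitaryGroup (s × e) ℂ) (i : e) :
    Real.sqrt ((Matrix.posSemidef_conjTranspose_mul_self (ptraceS W)).1.eigenvalues i)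
      ≤ Fintype.card s := by
  set Γ := ptraceS W with hΓ
  set hP := Matrix.posSemidef_conjTranspose_mul_self Γ with hPdef
  set v : e → ℂ := ⇑(hP.1.eigenvectorBasis i) with hv
  have hv1 : sqsum v = 1 := by
    have h := hP.1.eigenvectorBasis.orthonormal.1 i
    have h2 : ‖(hP.1.eigenvectorBasis i)‖ ^ 2 = 1 := by rw [h]; norm_num
    rw [EuclideanSpace.norm_eq] at h2
    rw [Real.sq_sqrt (by positivity)] at h2
    simpa [sqsum, Complex.normSq_eq_norm_sq, hv] using h2
  have heig : hP.1.eigenvalues i = sqsum (Γ *ᵥ v) := by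
    rw [hP.1.eigenvalues_eq i, ← Matrix.mulVec_mulVec, Matrix.dotProduct_mulVec,
      ← Matrix.star_mulVec]
    exact dotProduct_star_self_re _
  have key : Real.sqrt (sqsum (Γ *ᵥ v)) ≤ Fintype.card s := by
    rw [ptraceS_mulVec]
    refine (sqrt_sqsum_sum_le _ _).trans ?_
    have hone : ∀ j : s,
        Real.sqrt (sqsum (fun μ => (W *ᵥ (fun p : s × e => if p.1 = j then v p.2 else 0)) (j, μ)))
          ≤ 1 := by
      intro j
      set u : s × e → ℂ := fun p => if p.1 = j then v p.2 else 0 with hu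
      have hsub : sqsum (fun μ => (W *ᵥ u) (j, μ)) ≤ sqsum (W *ᵥ u) := by
        rw [sqsum, sqsum, Fintype.sum_prod_type]
        exact Finset.single_le_sum
          (f := fun j' => ∑ μ : e, Complex.normSq ((W *ᵥ u) (j', μ)))
          (fun _ _ => Finset.sum_nonneg fun _ _ => Complex.normSq_nonneg _)
          (Finset.mem_univ j)
      have hWu : sqsum (W *ᵥ u) = sqsum u := sqsum_mulVec_unitary hW u
      have huv : sqsum u = 1 := by
        rw [← hv1, sqsum, sqsum, Fintype.sum_prod_type]
        rw [Finset.sum_eq_single j]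
        · simp [hu]
        · intro b _ hb; simp [hu, hb]
        · simp
      have := hsub.trans_eq (hWu.trans huv)
      calc Real.sqrt (sqsum (fun μ => (W *ᵥ u) (j, μ))) ≤ Real.sqrt 1 :=
            Real.sqrt_le_sqrt this
        _ = 1 := Real.sqrt_one
    calc ∑ j : s, Real.sqrt (sqsum (fun μ =>
          (W *ᵥ (fun p : s × e => if p.1 = j then v p.2 else 0)) (j, μ)))
        ≤ ∑ _j : s, (1 : ℝ) := Finset.sum_le_sum fun j _ => hone j
      _ = Fintype.card s := by simp
  rw [heig]
  exact key

lemma trace_eq_sum_eigenvalues {k : Type*} [Fintype k] [DecidableEq k] {A : Matrix k k ℂ}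
    (hA : A.IsHermitian) : A.trace = ∑ i, (hA.eigenvalues i : ℂ) := by
  conv_lhs => rw [hA.spectral_theorem, Unitary.conjStarAlgAut_apply]
  rw [Matrix.trace_mul_cycle, Matrix.mem_unitaryGroup_iff'.mp hA.eigenvectorUnitary.2,
    one_mul, Matrix.trace_diagonal]
  rfl

lemma trace_sqrt_eq {k : Type*} [Fintype k] [DecidableEq k] {A : Matrix k k ℂ}
    (hA : A.PosSemidef) :
    hA.sqrt.trace = ∑ i, ((Real.sqrt (hA.1.eigenvalues i) : ℝ) : ℂ) := by
  rw [Matrix.PosSemidef.sqrt, Matrix.trace_mul_cycle,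
    Matrix.mem_unitaryGroup_iff'.mp hA.1.eigenvectorUnitary.2, one_mul, Matrix.trace_diagonal]
  rfl

lemma key_real (x y : ℝ) (hx0 : 0 ≤ x) (hx1 : x ≤ 1) (hy0 : 0 ≤ y) (hyx : y ≤ x)
    (hxy : x ≤ Real.sqrt y) :
    (1 - Real.sqrt (1 - x)) ^ 2 ≤ y ∧ y ≤ 1 - Real.sqrt (1 - x) ^ 2 := by
  have h1x : 0 ≤ 1 - x := by linarith
  have hΔsq : Real.sqrt (1 - x) ^ 2 = 1 - x := Real.sq_sqrt h1x
  constructor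
  · have hy1 : y ≤ 1 := hyx.trans hx1
    have hsynn : 0 ≤ Real.sqrt y := Real.sqrt_nonneg y
    have hsy2 : Real.sqrt y ^ 2 = y := Real.sq_sqrt hy0
    have hsy1 : Real.sqrt y ≤ 1 := Real.sqrt_le_one.mpr hy1
    have hyy : y ≤ Real.sqrt y := by nlinarith
    have h2 : 0 ≤ 2 - x - y := by linarith
    have hs : 0 ≤ Real.sqrt (1 - x) := Real.sqrt_nonneg _
    have hkey : 2 - x - y ≤ 2 * Real.sqrt (1 - x) := by
      nlinarith [sq_nonneg (x + y - 2 * Real.sqrt y), sq_nonneg (2 - x - y - 2 * Real.sqrt (1 - x)),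
        sq_nonneg (2 - x - y + 2 * Real.sqrt (1 - x))]
    nlinarith
  · rw [hΔsq]; linarith

end Stmt18Aux

/-- with `Γ = Tr_s[U(V_s† ⊗ 1_e)]`, `Δ = √(1 − ‖Γ‖_Tr/n)` and
`F = ‖Γ‖²_HS/(n_s n)`, one has `(1 − Δ)² ≤ F ≤ 1 − Δ²`. -/
theorem stmt18 {s e : Type*} [Fintype s] [Fintype e] [DecidableEq s] [DecidableEq e]
    [Nonempty s] [Nonempty e]
    (U : Matrix (s × e) (s × e) ℂ) (hU : U ∈ Matrix.unitaryGroup (s × e) ℂ)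
    (Vs : Matrix s s ℂ) (hVs : Vs ∈ Matrix.unitaryGroup s ℂ) :
    (1 - Real.sqrt (1 - traceNorm (ptraceS (U * (Vsᴴ ⊗ₖ (1 : Matrix e e ℂ)))) /
        (Fintype.card (s × e)))) ^ 2
      ≤ hsNorm (ptraceS (U * (Vsᴴ ⊗ₖ (1 : Matrix e e ℂ)))) ^ 2 /
        ((Fintype.card s) * (Fintype.card (s × e))) ∧
    hsNorm (ptraceS (U * (Vsᴴ ⊗ₖ (1 : Matrix e e ℂ)))) ^ 2 /
        ((Fintype.card s) * (Fintype.card (s × e)))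
      ≤ 1 - Real.sqrt (1 - traceNorm (ptraceS (U * (Vsᴴ ⊗ₖ (1 : Matrix e e ℂ)))) /
          (Fintype.card (s × e))) ^ 2 := by
  classical
  set W := U * (Vsᴴ ⊗ₖ (1 : Matrix e e ℂ)) with hWdef
  have hK : (Vsᴴ ⊗ₖ (1 : Matrix e e ℂ)) ∈ Matrix.unitaryGroup (s × e) ℂ := by
    rw [Matrix.mem_unitaryGroup_iff']
    have hstar : star (Vsᴴ ⊗ₖ (1 : Matrix e e ℂ)) = Vs ⊗ₖ (1 : Matrix e e ℂ) := by
      ext ⟨i, μ⟩ ⟨j, ν⟩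
      simp only [Matrix.star_eq_conjTranspose, Matrix.conjTranspose_apply,
        Matrix.kroneckerMap_apply, Matrix.one_apply, star_mul', star_star, apply_ite (star : ℂ → ℂ),
        star_one, star_zero]
      by_cases h : μ = ν <;> simp [h, eq_comm, mul_comm]
    rw [hstar, ← Matrix.mul_kronecker_mul, one_mul]
    have h1 : Vs * Vsᴴ = 1 := by
      rw [← Matrix.star_eq_conjTranspose]
      exact Matrix.mem_unitaryGroup_iff.mp hVs
    rw [h1]
    exact Matrix.one_kronecker_one
  have hW : W ∈ Matrix.unitaryGroup (s × e) ℂ := Submonoid.mul_mem _ hU hK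
  set Γ := ptraceS W with hΓ
  set lam := (Matrix.posSemidef_conjTranspose_mul_self Γ).1.eigenvalues with hlamdef
  have hlam0 : ∀ i, 0 ≤ lam i :=
    (Matrix.posSemidef_conjTranspose_mul_self Γ).eigenvalues_nonneg
  have hlamtop : ∀ i, Real.sqrt (lam i) ≤ Fintype.card s := fun i =>
    Stmt18Aux.sqrt_eigen_le hW i
  have hT : traceNorm Γ = ∑ i, Real.sqrt (lam i) := by
    rw [traceNorm, Stmt18Aux.trace_sqrt_eq]
    simp
    rfl
  have hH : hsNorm Γ ^ 2 = ∑ i, lam i := by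
    rw [hsNorm]
    have ht : (Matrix.trace (Γᴴ * Γ)).re = ∑ i, lam i := by
      rw [Stmt18Aux.trace_eq_sum_eigenvalues
        (Matrix.posSemidef_conjTranspose_mul_self Γ).1]
      simp
      rfl
    rw [ht, Real.sq_sqrt (Finset.sum_nonneg fun i _ => hlam0 i)]
  set ns : ℝ := (Fintype.card s : ℝ) with hns
  set nE : ℝ := (Fintype.card e : ℝ) with hnE
  have hns1 : (1 : ℝ) ≤ ns := by
    rw [hns]; exact_mod_cast Fintype.card_pos
  have hnE1 : (1 : ℝ) ≤ nE := by
    rw [hnE]; exact_mod_cast Fintype.card_pos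
  have hcard : (Fintype.card (s × e) : ℝ) = ns * nE := by
    rw [Fintype.card_prod, Nat.cast_mul]
  set T := traceNorm Γ with hTd
  set H2 := hsNorm Γ ^ 2 with hHd
  have hT0 : 0 ≤ T := by
    rw [hT]; exact Finset.sum_nonneg fun i _ => Real.sqrt_nonneg _
  have hH0 : 0 ≤ H2 := by rw [hH]; exact Finset.sum_nonneg fun i _ => hlam0 i
  have ha : H2 ≤ ns * T := by
    rw [hH, hT, Finset.mul_sum]
    refine Finset.sum_le_sum fun i _ => ?_
    have h := hlamtop i
    have h0 := Real.sqrt_nonneg (lam i)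
    calc lam i = Real.sqrt (lam i) * Real.sqrt (lam i) := (Real.mul_self_sqrt (hlam0 i)).symm
      _ ≤ ns * Real.sqrt (lam i) := by nlinarith
  have hb : T ^ 2 ≤ nE * H2 := by
    rw [hT, hH]
    have h := sq_sum_le_card_mul_sum_sq (s := (Finset.univ : Finset e))
      (f := fun i => Real.sqrt (lam i))
    have h2 : ∑ i : e, Real.sqrt (lam i) ^ 2 = ∑ i : e, lam i :=
      Finset.sum_congr rfl fun i _ => Real.sq_sqrt (hlam0 i)
    simpa [h2, hnE] using h
  have hd : T ≤ ns * nE := by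
    rw [hT]
    calc ∑ i : e, Real.sqrt (lam i) ≤ ∑ _i : e, ns := Finset.sum_le_sum fun i _ => hlamtop i
      _ = nE * ns := by simp [hnE, mul_comm]
      _ = ns * nE := mul_comm _ _
  have hNpos : (0 : ℝ) < ns * nE := by nlinarith
  have hx0 : 0 ≤ T / (ns * nE) := div_nonneg hT0 hNpos.le
  have hx1 : T / (ns * nE) ≤ 1 := (div_le_one hNpos).mpr hd
  have hy0 : 0 ≤ H2 / (ns * (ns * nE)) := div_nonneg hH0 (by nlinarith)
  have hyx : H2 / (ns * (ns * nE)) ≤ T / (ns * nE) := by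
    rw [div_le_div_iff₀ (by nlinarith) hNpos]
    nlinarith
  have hxy : T / (ns * nE) ≤ Real.sqrt (H2 / (ns * (ns * nE))) := by
    rw [Real.le_sqrt hx0 hy0]
    rw [div_pow, div_le_div_iff₀ (by positivity) (by nlinarith)]
    nlinarith
  have main := Stmt18Aux.key_real (T / (ns * nE)) (H2 / (ns * (ns * nE)))
    hx0 hx1 hy0 hyx hxy
  rw [hcard]
  exact ⟨main.1, main.2⟩
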